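/- Let g be an interspersion and M a finite set of natural numbers with #M = m ≥ 1. Then the restriction g|M (the subsequence of g consisting of terms lying in M) is eventually periodic with period m: there exists N such that (g|M)(n+m) = (g|M)(n) for all n ≥ N. -/

import Mathlib

open Classical

noncomputable section

/-- The minimal excludant of a set of naturals. -/
def mex (S : Set ℕ) : ℕ := sInf {v | v ∉ S}

/-- A rule sequence is regular if `f 0 = 0`, `f n ≤ n`, and `f` increases by 0 or 1. -/
def Regular (f : ℕ → ℕ) : Prop :=
  f 0 = 0 ∧ (∀ n, f n ≤ n) ∧ ∀ n, f n ≤ f (n + 1) ∧ f (n + 1) ≤ f n + 1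

/-- `g` is the Grundy sequence for Maximum Nim with rule `f`:
`g n = mex { g (n - i) : 1 ≤ i ≤ f n }`. -/
def MaxNimGrundy (f g : ℕ → ℕ) : Prop :=
  ∀ n, g n = mex {v | ∃ i, 1 ≤ i ∧ i ≤ f n ∧ g (n - i) = v}

/-- `h` is the Grundy sequence for Minimum Nim with rule `f`:
`h n = mex { h i : 0 ≤ i ≤ n - f n - 1 }`. -/
def MinNimGrundy (f h : ℕ → ℕ) : Prop :=
  ∀ n, h n = mex {v | ∃ i, i + f n + 1 ≤ n ∧ h i = v}

/-- Every natural number occurs infinitely often. -/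
def Infinitive (g : ℕ → ℕ) : Prop := ∀ k, {n | g n = k}.Infinite

/-- The position of the first occurrence of `k` in `g`. -/
def firstOcc (g : ℕ → ℕ) (k : ℕ) : ℕ := sInf {n | g n = k}

/-- `n` is not the first occurrence of its value in `g`. -/
def NotFirst (g : ℕ → ℕ) (n : ℕ) : Prop := ∃ m < n, g m = g n

/-- The subsequence of `g` obtained by deleting the first occurrence of each value. -/
def Lam (g : ℕ → ℕ) : ℕ → ℕ := fun m => g (Nat.nth (NotFirst g) m)

/-- Kimberling's fractal sequences: infinitive, first occurrences in increasing
order of value (F2), and deleting first occurrences leaves the sequence unchanged (F3). -/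
def Fractal (g : ℕ → ℕ) : Prop :=
  Infinitive g ∧
  (∀ j k, j < k → firstOcc g j < firstOcc g k) ∧
  (∀ m, Lam g m = g m)

/-- The restriction `g|M`: the subsequence of terms of `g` lying in `M`. -/
def restrictSeq (g : ℕ → ℕ) (M : Set ℕ) : ℕ → ℕ :=
  fun m => g (Nat.nth (fun n => g n ∈ M) m)

/-- An interspersion: an infinitive sequence such that for `i < j` the restriction
`g|{i,j}` is an initial block of `i`'s followed by strict alternation `j, i, j, i, ...`. -/
def Interspersion (g : ℕ → ℕ) : Prop :=
  Infinitive g ∧ ∀ i j, i < j → ∃ N,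
    (∀ n < N, restrictSeq g {i, j} n = i) ∧
    ∀ n, restrictSeq g {i, j} (N + 2 * n) = j ∧
         restrictSeq g {i, j} (N + 2 * n + 1) = i

/-- `striangle g i j`: the number of occurrences of `i` strictly before the first
occurrence of `j`, not counting the occurrence `g 0 = 0` when `i = 0`. -/
def striangle (g : ℕ → ℕ) (i j : ℕ) : ℕ :=
  Set.ncard {n | g n = i ∧ n < firstOcc g j ∧ (i = 0 → n ≠ 0)}

/-- A subadditive triangle: `s i j + s j k - 1 ≤ s i k ≤ s i j + s j k` for `i < j < k`. -/
def SubadditiveTriangle (s : ℕ → ℕ → ℕ) : Prop :=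
  ∀ i j k, i < j → j < k →
    s i j + s j k ≤ s i k + 1 ∧ s i k ≤ s i j + s j k

/-- The next occurrence of `i` in `g` strictly after position `a`. -/
def nextOcc (g : ℕ → ℕ) (i a : ℕ) : ℕ := sInf {x | a < x ∧ g x = i}

lemma nextOcc_spec {g : ℕ → ℕ} (hg : Infinitive g) (i a : ℕ) :
    a < nextOcc g i a ∧ g (nextOcc g i a) = i ∧
      ∀ x, a < x → x < nextOcc g i a → g x ≠ i := by
  have hne : {x | a < x ∧ g x = i}.Nonempty := by
    obtain ⟨b, hb, hab⟩ := (hg i).exists_gt a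
    exact ⟨b, hab, hb⟩
  have hmem := Nat.sInf_mem hne
  refine ⟨hmem.1, hmem.2, fun x h1 h2 hx => absurd h2 (not_lt.mpr ?_)⟩
  exact Nat.sInf_le ⟨h1, hx⟩

lemma pair_core {g : ℕ → ℕ} (hg : Infinitive g) {u v N : ℕ} (huv : u < v)
    (halt : ∀ n, restrictSeq g {u, v} (N + 2 * n) = v ∧
      restrictSeq g {u, v} (N + 2 * n + 1) = u)
    {i j : ℕ} (hi : (i = u ∧ j = v) ∨ (i = v ∧ j = u)) :
    ∃ C, ∀ a, C ≤ a → g a = i →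
      ((Finset.Ioo a (nextOcc g i a)).filter (fun x => g x = j)).card = 1 := by
  classical
  set A : ℕ → Prop := fun n => g n ∈ ({u, v} : Set ℕ) with hAdef
  have hA : (setOf A).Infinite := (hg u).mono (fun n hn => by
    simp only [A, Set.mem_setOf_eq] at hn ⊢
    show g n ∈ ({u, v} : Set ℕ); rw [hn]; exact Set.mem_insert u {v})
  have hij : i ≠ j := by rcases hi with ⟨h1, h2⟩ | ⟨h1, h2⟩ <;> omega
  have hval : ∀ s, g (Nat.nth A s) = restrictSeq g {u, v} s := fun s => rfl
  refine ⟨Nat.nth A N + 1, fun a ha hga => ?_⟩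
  have hAa : A a := by
    simp only [A, Set.mem_setOf_eq, Set.mem_insert_iff, Set.mem_singleton_iff]
    rcases hi with ⟨h1, _⟩ | ⟨h1, _⟩ <;> omega
  set t := Nat.count A a with htdef
  have hta : Nat.nth A t = a := Nat.nth_count hAa
  have htN : N < t := by
    have : Nat.nth A N < Nat.nth A t := by omega
    exact (Nat.nth_lt_nth hA).mp this
  have key : g (Nat.nth A (t + 1)) = j ∧ g (Nat.nth A (t + 2)) = i := by
    obtain ⟨d, hd, hd1⟩ : ∃ d, t = N + d ∧ 1 ≤ d := ⟨t - N, by omega, by omega⟩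
    rcases Nat.even_or_odd d with ⟨k, hk⟩ | ⟨k, hk⟩
    · -- t = N + 2k, so g a = v, hence i = v, j = u
      have hgav : g a = v := by
        rw [← hta, hval]
        have : t = N + 2 * k := by omega
        rw [this]; exact (halt k).1
      have hiv : i = v ∧ j = u := by
        rcases hi with ⟨h1, h2⟩ | ⟨h1, h2⟩
        · omega
        · exact ⟨h1, h2⟩
      constructor
      · rw [hval]
        have : t + 1 = N + 2 * k + 1 := by omega
        rw [this, (halt k).2, hiv.2]
      · rw [hval]
        have : t + 2 = N + 2 * (k + 1) := by omega
        rw [this, (halt (k + 1)).1, hiv.1]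
    · -- t = N + 2k + 1, so g a = u, hence i = u, j = v
      have hgau : g a = u := by
        rw [← hta, hval]
        have : t = N + 2 * k + 1 := by omega
        rw [this]; exact (halt k).2
      have hiu : i = u ∧ j = v := by
        rcases hi with ⟨h1, h2⟩ | ⟨h1, h2⟩
        · exact ⟨h1, h2⟩
        · omega
      constructor
      · rw [hval]
        have : t + 1 = N + 2 * (k + 1) := by omega
        rw [this, (halt (k + 1)).1, hiu.2]
      · rw [hval]
        have : t + 2 = N + 2 * (k + 1) + 1 := by omega
        rw [this, (halt (k + 1)).2, hiu.1]
  have hmemA : ∀ x, g x = i ∨ g x = j → A x := by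
    intro x hx
    simp only [A, Set.mem_setOf_eq, Set.mem_insert_iff, Set.mem_singleton_iff]
    rcases hi with ⟨h1, h2⟩ | ⟨h1, h2⟩ <;> omega
  have hindex : ∀ x, a < x → x < Nat.nth A (t + 2) → (g x = i ∨ g x = j) →
      x = Nat.nth A (t + 1) := by
    intro x hx1 hx2 hx3
    have hAx : A x := hmemA x hx3
    have hxs : Nat.nth A (Nat.count A x) = x := Nat.nth_count hAx
    have h1 : t < Nat.count A x := (Nat.nth_lt_nth hA).mp (by omega)
    have h2 : Nat.count A x < t + 2 := (Nat.nth_lt_nth hA).mp (by omega)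
    have : Nat.count A x = t + 1 := by omega
    rw [← hxs, this]
  have hnext : nextOcc g i a = Nat.nth A (t + 2) := by
    have h1 : a < Nat.nth A (t + 2) := by
      have := (Nat.nth_lt_nth hA (k := t) (n := t + 2)).mpr (by omega)
      omega
    have h3 : ∀ x, a < x → x < Nat.nth A (t + 2) → g x ≠ i := by
      intro x hx1 hx2 hgx
      have hxx := hindex x hx1 hx2 (Or.inl hgx)
      rw [hxx, key.1] at hgx
      exact hij hgx.symm
    obtain ⟨s1, s2, s3⟩ := nextOcc_spec hg i a
    have hub : Nat.nth A (t + 2) ≤ nextOcc g i a := by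
      by_contra hcon
      exact h3 _ s1 (by omega) s2
    exact le_antisymm (Nat.sInf_le ⟨h1, key.2⟩) hub
  have hsingle : (Finset.Ioo a (nextOcc g i a)).filter (fun x => g x = j) =
      {Nat.nth A (t + 1)} := by
    rw [hnext]
    ext x
    simp only [Finset.mem_filter, Finset.mem_Ioo, Finset.mem_singleton]
    constructor
    · rintro ⟨⟨hx1, hx2⟩, hx3⟩
      exact hindex x hx1 hx2 (Or.inr hx3)
    · rintro rfl
      have hlt1 : a < Nat.nth A (t + 1) := by
        have := (Nat.nth_lt_nth hA (k := t) (n := t + 1)).mpr (by omega)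
        omega
      have hlt2 : Nat.nth A (t + 1) < Nat.nth A (t + 2) :=
        (Nat.nth_lt_nth hA).mpr (by omega)
      exact ⟨⟨hlt1, hlt2⟩, key.1⟩
  rw [hsingle, Finset.card_singleton]

lemma pair_lemma {g : ℕ → ℕ} (hg : Interspersion g) {i j : ℕ} (hij : i ≠ j) :
    ∃ C, ∀ a, C ≤ a → g a = i →
      ((Finset.Ioo a (nextOcc g i a)).filter (fun x => g x = j)).card = 1 := by
  rcases hij.lt_or_gt with h | h
  · obtain ⟨N, _, halt⟩ := hg.2 i j h
    exact pair_core hg.1 h halt (Or.inl ⟨rfl, rfl⟩)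
  · obtain ⟨N, _, halt⟩ := hg.2 j i h
    exact pair_core hg.1 h halt (Or.inr ⟨rfl, rfl⟩)

lemma count_add_card (p : ℕ → Prop) [DecidablePred p] {a b : ℕ} (hab : a ≤ b) :
    Nat.count p b = Nat.count p a + ((Finset.Ico a b).filter p).card := by
  rw [Nat.count_eq_card_filter_range, Nat.count_eq_card_filter_range,
    Finset.range_eq_Ico,
    ← Finset.Ico_union_Ico_eq_Ico (Nat.zero_le a) hab, Finset.filter_union,
    Finset.card_union_of_disjoint]
  rw [Finset.range_eq_Ico]
  exact Finset.disjoint_filter_filter (p := p) (q := p) (Finset.Ico_disjoint_Ico_consecutive 0 a b)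

/-- the restriction of an interspersion to a finite nonempty set `M`
is eventually periodic with period `#M`. -/
theorem interspersion_restrict_periodic (g : ℕ → ℕ) (hg : Interspersion g)
    (M : Finset ℕ) (hM : 1 ≤ M.card) :
    ∃ N, ∀ n, N ≤ n → restrictSeq g ↑M (n + M.card) = restrictSeq g ↑M n := by
  classical
  set B : ℕ → Prop := fun n => g n ∈ (M : Set ℕ) with hBdef
  obtain ⟨i0, hi0⟩ := Finset.card_pos.mp hM
  have hBinf : (setOf B).Infinite := (hg.1 i0).mono (fun n hn => by
    simp only [B, Set.mem_setOf_eq] at hn ⊢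
    show g n ∈ (M : Set ℕ); rw [hn]; exact hi0)
  have key : ∀ i j : ℕ, ∃ C, i ≠ j → ∀ a, C ≤ a → g a = i →
      ((Finset.Ioo a (nextOcc g i a)).filter (fun x => g x = j)).card = 1 := by
    intro i j
    by_cases h : i = j
    · exact ⟨0, fun h' => absurd h h'⟩
    · obtain ⟨C, hC⟩ := pair_lemma hg h
      exact ⟨C, fun _ => hC⟩
  choose C hC using key
  refine ⟨(M ×ˢ M).sup (fun q => C q.1 q.2), fun n hn => ?_⟩
  set p := Nat.nth B n with hp
  have hnp : n ≤ p := (Nat.nth_strictMono hBinf).le_apply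
  have hgp : B p := Nat.nth_mem_of_infinite hBinf n
  set i := g p with hidef
  have hiM : i ∈ M := hgp
  obtain ⟨h1, h2, h3⟩ := nextOcc_spec hg.1 i p
  set p' := nextOcc g i p with hp'
  have hcard1 : ∀ j ∈ M, j ≠ i →
      ((Finset.Ioo p p').filter (fun x => g x = j)).card = 1 := by
    intro j hjM hji
    have hCle : C i j ≤ p :=
      le_trans (le_trans (Finset.le_sup (f := fun q => C q.1 q.2)
        (b := (i, j)) (Finset.mem_product.mpr ⟨hiM, hjM⟩)) hn) hnp
    exact hC i j (Ne.symm hji) p hCle rfl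
  have hcardi : ((Finset.Ioo p p').filter (fun x => g x = i)).card = 0 := by
    rw [Finset.card_eq_zero, Finset.filter_eq_empty_iff]
    intro x hx
    rw [Finset.mem_Ioo] at hx
    exact h3 x hx.1 hx.2
  have hdisj : ∀ j1 ∈ M, ∀ j2 ∈ M, j1 ≠ j2 →
      Disjoint ((Finset.Ioo p p').filter (fun x => g x = j1))
        ((Finset.Ioo p p').filter (fun x => g x = j2)) := by
    intro j1 _ j2 _ hne
    rw [Finset.disjoint_left]
    intro x hx1 hx2
    rw [Finset.mem_filter] at hx1 hx2
    exact hne (hx1.2 ▸ hx2.2 ▸ rfl)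
  have hunion : (Finset.Ioo p p').filter B =
      M.biUnion (fun j => (Finset.Ioo p p').filter (fun x => g x = j)) := by
    ext x
    simp only [Finset.mem_filter, Finset.mem_biUnion, B, Set.mem_setOf_eq,
      Finset.mem_coe]
    constructor
    · rintro ⟨hx1, hx2⟩
      exact ⟨g x, hx2, hx1, rfl⟩
    · rintro ⟨j, hj, hx1, rfl⟩
      exact ⟨hx1, hj⟩
  have hcardB : ((Finset.Ioo p p').filter B).card = M.card - 1 := by
    rw [hunion, Finset.card_biUnion hdisj, ← Finset.add_sum_erase M _ hiM, hcardi]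
    have : ∑ j ∈ M.erase i, ((Finset.Ioo p p').filter (fun x => g x = j)).card
        = ∑ j ∈ M.erase i, 1 := by
      apply Finset.sum_congr rfl
      intro j hj
      rw [Finset.mem_erase] at hj
      exact hcard1 j hj.2 hj.1
    rw [this, Finset.sum_const, smul_eq_mul, mul_one, Finset.card_erase_of_mem hiM]
    omega
  have hIcoCard : ((Finset.Ico p p').filter B).card = M.card := by
    have hins : Finset.Ico p p' = insert p (Finset.Ioo p p') := by
      ext x
      simp only [Finset.mem_Ico, Finset.mem_insert, Finset.mem_Ioo]
      omega
    rw [hins, Finset.filter_insert, if_pos hgp,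
      Finset.card_insert_of_notMem (by simp), hcardB]
    omega
  have hcount : Nat.count B p' = n + M.card := by
    rw [count_add_card B h1.le, hIcoCard, hp, Nat.count_nth_of_infinite hBinf]
  have hBp' : B p' := by
    simp only [B, Set.mem_setOf_eq, Finset.mem_coe]
    rw [h2]; exact hiM
  have hnth : Nat.nth B (n + M.card) = p' := by
    rw [← hcount]; exact Nat.nth_count hBp'
  show g (Nat.nth B (n + M.card)) = g (Nat.nth B n)
  rw [hnth, ← hp, h2]
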